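/- The polynomials p_1 and p_2 are strictly decreasing on [0,1]. For every n ≥ 3 there is a unique point x_n ∈ (0,1) at which p_n attains its maximum over [0,1]; p_n is strictly increasing on [0,x_n] and strictly decreasing on [x_n,1], and x_n is the unique root in (0,1) of the equation Σ_{j=1}^{n-1} (1-x)^j/j = 1. -/

import Mathlib

open Finset Real

/-- `p_n(x) = 1 - x - Σ_{k=2}^{n} (1-x)^k/(k(k-1))`, the winning probability of the
`x`-strategy with `n` items. -/
noncomputable def pwin (n : ℕ) (x : ℝ) : ℝ :=
  1 - x - ∑ k ∈ Finset.Icc 2 n, (1 - x) ^ k / ((k : ℝ) * ((k : ℝ) - 1))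

noncomputable def S (n : ℕ) (x : ℝ) : ℝ :=
  ∑ j ∈ Finset.Icc 1 (n - 1), (1 - x) ^ j / (j : ℝ)

lemma S_continuous (n : ℕ) : Continuous (S n) := by
  unfold S
  exact continuous_finset_sum _ fun j _ =>
    ((continuous_const.sub continuous_id).pow j).div_const _

lemma sum_reindex (n : ℕ) (x : ℝ) :
    ∑ k ∈ Finset.Icc 2 n, (1 - x) ^ (k - 1) / ((k : ℝ) - 1) = S n x := by
  unfold S
  refine Finset.sum_nbij' (fun k => k - 1) (fun j => j + 1) ?_ ?_ ?_ ?_ ?_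
  · intro a ha; simp only [Finset.mem_Icc] at *; omega
  · intro a ha; simp only [Finset.mem_Icc] at *; omega
  · intro a ha; simp only [Finset.mem_Icc] at ha; omega
  · intro a ha; simp only [Finset.mem_Icc] at ha; omega
  · intro a ha
    simp only [Finset.mem_Icc] at ha
    have h1 : 1 ≤ a := by omega
    have : ((a - 1 : ℕ) : ℝ) = (a : ℝ) - 1 := by
      push_cast [Nat.cast_sub h1]; ring
    rw [this]

lemma hasDerivAt_pwin (n : ℕ) (x : ℝ) :
    HasDerivAt (pwin n) (-1 + S n x) x := by
  have hbase : HasDerivAt (fun x : ℝ => 1 - x) (-1) x := by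
    simpa using (hasDerivAt_id x).const_sub 1
  have hterm : ∀ k ∈ Finset.Icc 2 n,
      HasDerivAt (fun x : ℝ => (1 - x) ^ k / ((k : ℝ) * ((k : ℝ) - 1)))
        (-((1 - x) ^ (k - 1) / ((k : ℝ) - 1))) x := by
    intro k hk
    have hk2 : 2 ≤ k := (Finset.mem_Icc.mp hk).1
    have h1 : HasDerivAt (fun x : ℝ => (1 - x) ^ k)
        ((k : ℝ) * (1 - x) ^ (k - 1) * (-1)) x := hbase.pow k
    have h2 := h1.div_const ((k : ℝ) * ((k : ℝ) - 1))
    refine h2.congr_deriv ?_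
    have hk0 : (k : ℝ) ≠ 0 := by
      have : (2 : ℝ) ≤ (k : ℝ) := by exact_mod_cast hk2
      linarith
    have hk1 : (k : ℝ) - 1 ≠ 0 := by
      have : (2 : ℝ) ≤ (k : ℝ) := by exact_mod_cast hk2
      intro h; linarith
    rw [mul_assoc, mul_div_mul_left _ _ hk0]
    ring
  have hsum : HasDerivAt
      (fun x : ℝ => ∑ k ∈ Finset.Icc 2 n, (1 - x) ^ k / ((k : ℝ) * ((k : ℝ) - 1)))
      (∑ k ∈ Finset.Icc 2 n, -((1 - x) ^ (k - 1) / ((k : ℝ) - 1))) x :=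
    HasDerivAt.fun_sum hterm
  have h := hbase.sub hsum
  have : (-1 : ℝ) - ∑ k ∈ Finset.Icc 2 n, -((1 - x) ^ (k - 1) / ((k : ℝ) - 1))
      = -1 + S n x := by
    rw [Finset.sum_neg_distrib, sub_neg_eq_add, sum_reindex]
  rw [this] at h
  exact h

lemma pwin_continuous (n : ℕ) : Continuous (pwin n) := by
  have h : Differentiable ℝ (pwin n) := fun x => (hasDerivAt_pwin n x).differentiableAt
  exact h.continuous

lemma S_strictAntiOn {n : ℕ} (hn : 2 ≤ n) : StrictAntiOn (S n) (Set.Icc (0:ℝ) 1) := by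
  intro x hx y hy hxy
  unfold S
  apply Finset.sum_lt_sum_of_nonempty
  · exact ⟨1, by simp only [Finset.mem_Icc]; omega⟩
  · intro j hj
    have hj1 : 1 ≤ j := (Finset.mem_Icc.mp hj).1
    have h0 : (0:ℝ) ≤ 1 - y := by linarith [hy.2]
    have hlt : 1 - y < 1 - x := by linarith
    have hpow : (1 - y) ^ j < (1 - x) ^ j := pow_lt_pow_left₀ hlt h0 (by omega)
    have hjpos : (0:ℝ) < (j : ℝ) := by exact_mod_cast (by omega : 0 < j)
    exact div_lt_div_of_pos_right hpow hjpos

theorem stmt3 :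
    StrictAntiOn (pwin 1) (Set.Icc (0:ℝ) 1) ∧
    StrictAntiOn (pwin 2) (Set.Icc (0:ℝ) 1) ∧
    (∀ n : ℕ, 3 ≤ n → ∃ xn ∈ Set.Ioo (0:ℝ) 1,
      IsMaxOn (pwin n) (Set.Icc (0:ℝ) 1) xn ∧
      (∀ y ∈ Set.Icc (0:ℝ) 1, IsMaxOn (pwin n) (Set.Icc (0:ℝ) 1) y → y = xn) ∧
      StrictMonoOn (pwin n) (Set.Icc (0:ℝ) xn) ∧
      StrictAntiOn (pwin n) (Set.Icc xn 1) ∧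
      (∀ y ∈ Set.Ioo (0:ℝ) 1,
        (∑ j ∈ Finset.Icc 1 (n - 1), (1 - y) ^ j / (j : ℝ)) = 1 ↔ y = xn)) := by
  refine ⟨?_, ?_, ?_⟩
  · -- n = 1
    intro x hx y hy hxy
    have he : Finset.Icc 2 1 = (∅ : Finset ℕ) := Finset.Icc_eq_empty (by omega)
    simp only [pwin, he, Finset.sum_empty, sub_zero]
    linarith
  · -- n = 2
    apply strictAntiOn_of_deriv_neg (convex_Icc _ _) (pwin_continuous 2).continuousOn
    intro x hx
    rw [interior_Icc] at hx
    rw [(hasDerivAt_pwin 2 x).deriv]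
    have : S 2 x = 1 - x := by
      unfold S
      norm_num
    rw [this]
    linarith [hx.1]
  · -- n ≥ 3
    intro n hn
    have hn2 : 2 ≤ n := by omega
    have hS1 : S n 1 = 0 := by
      unfold S
      apply Finset.sum_eq_zero
      intro j hj
      have hj1 : 1 ≤ j := (Finset.mem_Icc.mp hj).1
      simp [zero_pow (by omega : j ≠ 0)]
    have hS0 : 1 < S n 0 := by
      have hsub : ({1, 2} : Finset ℕ) ⊆ Finset.Icc 1 (n - 1) := by
        intro j hj
        simp only [Finset.mem_insert, Finset.mem_singleton] at hj
        simp only [Finset.mem_Icc]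
        rcases hj with rfl | rfl <;> omega
      have hle := Finset.sum_le_sum_of_subset_of_nonneg hsub
        (fun j _ _ => by positivity : ∀ j ∈ Finset.Icc 1 (n-1), j ∉ ({1,2} : Finset ℕ) →
          0 ≤ (1 - (0:ℝ)) ^ j / (j : ℝ))
      have hval : ∑ j ∈ ({1, 2} : Finset ℕ), (1 - (0:ℝ)) ^ j / (j : ℝ) = 3 / 2 := by
        norm_num
      unfold S
      rw [← hval] at *
      calc (1:ℝ) < ∑ j ∈ ({1, 2} : Finset ℕ), (1 - (0:ℝ)) ^ j / (j : ℝ) := by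
            rw [hval]; norm_num
        _ ≤ _ := hle
    obtain ⟨xn, hxn, hroot⟩ := intermediate_value_Ioo' (by norm_num : (0:ℝ) ≤ 1)
      (S_continuous n).continuousOn ⟨by rw [hS1]; norm_num, hS0⟩
    have hxnmem : xn ∈ Set.Icc (0:ℝ) 1 := ⟨hxn.1.le, hxn.2.le⟩
    have hSanti := S_strictAntiOn hn2
    have hmono : StrictMonoOn (pwin n) (Set.Icc (0:ℝ) xn) := by
      apply strictMonoOn_of_deriv_pos (convex_Icc _ _) (pwin_continuous n).continuousOn
      intro x hx
      rw [interior_Icc] at hx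
      rw [(hasDerivAt_pwin n x).deriv]
      have hxI : x ∈ Set.Icc (0:ℝ) 1 := ⟨hx.1.le, by linarith [hxn.2, hx.2]⟩
      have := hSanti hxI hxnmem hx.2
      rw [hroot] at this
      linarith
    have hanti : StrictAntiOn (pwin n) (Set.Icc xn 1) := by
      apply strictAntiOn_of_deriv_neg (convex_Icc _ _) (pwin_continuous n).continuousOn
      intro x hx
      rw [interior_Icc] at hx
      rw [(hasDerivAt_pwin n x).deriv]
      have hxI : x ∈ Set.Icc (0:ℝ) 1 := ⟨by linarith [hxn.1, hx.1], hx.2.le⟩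
      have := hSanti hxnmem hxI hx.1
      rw [hroot] at this
      linarith
    have hmax : IsMaxOn (pwin n) (Set.Icc (0:ℝ) 1) xn := by
      apply isMaxOn_iff.mpr
      intro y hy
      rcases le_total y xn with h | h
      · exact hmono.monotoneOn ⟨hy.1, h⟩ ⟨hxn.1.le, le_refl _⟩ h
      · exact hanti.antitoneOn ⟨le_refl _, hxn.2.le⟩ ⟨h, hy.2⟩ h
    refine ⟨xn, hxn, hmax, ?_, hmono, hanti, ?_⟩
    · intro y hy hymax
      by_contra hne
      rcases lt_or_gt_of_ne hne with h | h
      · have h1 : pwin n y < pwin n xn := hmono ⟨hy.1, h.le⟩ ⟨hxn.1.le, le_refl _⟩ h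
        have h2 : pwin n xn ≤ pwin n y := isMaxOn_iff.mp hymax xn hxnmem
        linarith
      · have h1 : pwin n xn > pwin n y := hanti ⟨le_refl _, hxn.2.le⟩ ⟨h.le, hy.2⟩ h
        have h2 : pwin n xn ≤ pwin n y := isMaxOn_iff.mp hymax xn hxnmem
        linarith
    · intro y hy
      have hyI : y ∈ Set.Icc (0:ℝ) 1 := ⟨hy.1.le, hy.2.le⟩
      constructor
      · intro hSy
        by_contra hne
        rcases lt_or_gt_of_ne hne with h | h
        · have := hSanti hyI hxnmem h
          rw [hroot, show S n y = 1 from hSy] at this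
          exact lt_irrefl _ this
        · have := hSanti hxnmem hyI h
          rw [hroot, show S n y = 1 from hSy] at this
          exact lt_irrefl _ this
      · rintro rfl
        exact hroot
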